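/- Let s, t be real numbers with 0 < t < 1/2 ≤ s < 1 and s + t > 1. Then the supremum of −log(x⁻¹ − 1)/(y − x) over all pairs (x, y) with 1/2 ≤ x ≤ s, 1 − x < y, and y ≤ t equals log(t⁻¹ − 1)/(2t − 1). -/

import Mathlib

open Real Set Filter Topology

noncomputable def Fc : ℝ → ℝ := fun x => Real.log (1 - x) - Real.log x

lemma Fc_concave : ConcaveOn ℝ (Ico (1/2 : ℝ) 1) Fc := by
  have hI : interior (Ico (1/2 : ℝ) 1) = Ioo (1/2 : ℝ) 1 := interior_Ico
  apply concaveOn_of_hasDerivWithinAt2_nonpos (f' := fun x => -(1-x)⁻¹ - x⁻¹)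
      (f'' := fun x => -((1-x)⁻¹)^2 + (x⁻¹)^2) (convex_Ico _ _)
  · apply ContinuousOn.sub
    · exact (Real.continuousOn_log.comp (by fun_prop) (by
        rintro x ⟨h1, h2⟩; simp; intro h; linarith))
    · exact (Real.continuousOn_log.mono (by
        rintro x ⟨h1, h2⟩; simp; intro h; linarith [h1]))
  · rw [hI]
    rintro x ⟨h1, h2⟩
    have hx0 : x ≠ 0 := by intro h; simp [h] at h1; linarith
    have h1x : (1:ℝ) - x ≠ 0 := by intro h; linarith [sub_eq_zero.mp h]
    have d1 : HasDerivAt (fun x : ℝ => Real.log (1 - x)) (-(1-x)⁻¹) x := by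
      have := ((Real.hasDerivAt_log h1x).comp x ((hasDerivAt_id x).const_sub 1))
      simpa [Function.comp_def] using this
    have d2 : HasDerivAt Fc (-(1-x)⁻¹ - x⁻¹) x := d1.sub (Real.hasDerivAt_log hx0)
    exact d2.hasDerivWithinAt
  · rw [hI]
    rintro x ⟨h1, h2⟩
    have hx0 : x ≠ 0 := by intro h; simp [h] at h1; linarith
    have h1x : (1:ℝ) - x ≠ 0 := by intro h; linarith [sub_eq_zero.mp h]
    have d1 : HasDerivAt (fun x : ℝ => -(1-x)⁻¹) (-((1-x)⁻¹)^2) x := by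
      have h := (((hasDerivAt_id x).const_sub 1).inv h1x).neg
      convert h using 1
      · rfl
      · rfl
      · rfl
      · simp only [id]; rw [inv_pow]; ring
    have d2 : HasDerivAt (fun x : ℝ => x⁻¹) (-(x⁻¹)^2) x := by
      have h := (hasDerivAt_id x).inv hx0
      convert h using 1
      · rfl
      · rfl
      · rfl
      · simp only [id]; ring
    have := d1.sub d2
    simp only [sub_neg_eq_add] at this
    exact this.hasDerivWithinAt
  · rw [hI]
    rintro x ⟨h1, h2⟩
    have hx : (0:ℝ) < 1 - x := by linarith
    have h3 : (1-x)^2 < x^2 := by nlinarith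
    have h2' : ((x:ℝ)⁻¹)^2 < ((1-x)⁻¹)^2 := by
      rw [inv_pow, inv_pow]
      exact inv_strictAnti₀ (by positivity) h3
    linarith

lemma Fc_half : Fc (1/2) = 0 := by norm_num [Fc]

lemma Fc_secant {a b : ℝ} (ha : 1/2 < a) (hab : a ≤ b) (hb : b < 1) :
    Fc b / (2*b - 1) ≤ Fc a / (2*a - 1) := by
  rcases eq_or_lt_of_le hab with rfl | hab
  · exact le_refl _
  · have hmem : ∀ c : ℝ, 1/2 < c → c < 1 → c ∈ Ico (1/2 : ℝ) 1 := fun c h1 h2 => ⟨le_of_lt h1, h2⟩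
    have key := (Fc_concave.neg).secant_mono (a := 1/2) (x := a) (y := b)
      (by constructor <;> norm_num) (hmem a ha (lt_trans hab hb)) (hmem b (lt_trans ha hab) hb)
      (ne_of_gt ha) (ne_of_gt (lt_trans ha hab)) hab.le
    simp only [Pi.neg_apply, Fc_half, neg_zero, sub_zero] at key
    have h1 : (0:ℝ) < 2*a - 1 := by linarith
    have h2 : (0:ℝ) < 2*b - 1 := by linarith
    rw [div_le_div_iff₀ h2 h1]
    have h3 : (0:ℝ) < a - 1/2 := by linarith
    have h4 : (0:ℝ) < b - 1/2 := by linarith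
    rw [div_le_div_iff₀ h3 h4] at key
    nlinarith [key]

theorem sup_region_plus_case2 (s t : ℝ) (ht : 0 < t) (ht2 : t < 1 / 2)
    (hs : 1 / 2 ≤ s) (hs1 : s < 1) (hst : s + t > 1) :
    sSup {r : ℝ | ∃ x y : ℝ, 1 / 2 ≤ x ∧ x ≤ s ∧ 1 - x < y ∧ y ≤ t ∧
      r = -Real.log (x⁻¹ - 1) / (y - x)} = Real.log (t⁻¹ - 1) / (2 * t - 1) := by
  have ht1 : (0:ℝ) < 1 - t := by linarith
  have hlog : Real.log (t⁻¹ - 1) = Real.log (1 - t) - Real.log t := by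
    rw [show t⁻¹ - 1 = (1 - t)/t by field_simp, Real.log_div (by linarith) (ne_of_gt ht)]
  have hL : Real.log (t⁻¹ - 1) / (2 * t - 1) = Fc (1 - t) / (2*(1-t) - 1) := by
    rw [hlog]
    have : Fc (1 - t) = Real.log t - Real.log (1 - t) := by simp [Fc]
    rw [this]
    rw [show (2*(1-t) - 1 : ℝ) = -(2*t-1) by ring, div_neg, ← neg_div, neg_sub]
  -- upper bound
  have hub : ∀ r ∈ {r : ℝ | ∃ x y : ℝ, 1 / 2 ≤ x ∧ x ≤ s ∧ 1 - x < y ∧ y ≤ t ∧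
      r = -Real.log (x⁻¹ - 1) / (y - x)}, r ≤ Real.log (t⁻¹ - 1) / (2 * t - 1) := by
    rintro r ⟨x, y, hx1, hx2, hxy, hyt, rfl⟩
    have hxt : 1 - t < x := by linarith
    have hx0 : (0:ℝ) < x := by linarith
    have hx1' : x < 1 := lt_of_le_of_lt hx2 hs1
    have hFx : Real.log (x⁻¹ - 1) = Fc x := by
      rw [show x⁻¹ - 1 = (1 - x)/x by field_simp,
        Real.log_div (by intro h; linarith [sub_eq_zero.mp h]) (ne_of_gt hx0)]
      rfl
    rw [hFx, show -Fc x / (y - x) = Fc x / (x - y) by rw [← neg_sub y x, div_neg, neg_div]]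
    have hFneg : Fc x < 0 := by
      have : Real.log (1 - x) < Real.log x := Real.log_lt_log (by linarith) (by linarith)
      simp only [Fc]; linarith
    have hd1 : (0:ℝ) < x - y := by linarith
    have hd2 : x - y < 2*x - 1 := by linarith
    have step1 : Fc x / (x - y) ≤ Fc x / (2*x - 1) := by
      rw [div_le_div_iff₀ hd1 (by linarith)]
      nlinarith
    have step2 : Fc x / (2*x - 1) ≤ Fc (1 - t) / (2*(1-t) - 1) :=
      Fc_secant (by linarith) (le_of_lt hxt) hx1'
    rw [hL]; linarith
  refine csSup_eq_of_forall_le_of_forall_lt_exists_gt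
    ⟨-Real.log (s⁻¹ - 1) / (t - s), s, t, hs, le_refl s, by linarith, le_refl t, rfl⟩ hub ?_
  intro w hw
  set g : ℝ → ℝ := fun x => -Real.log (x⁻¹ - 1) / (t - x) with hg_def
  have hne : (1:ℝ) - t ≠ 0 := ne_of_gt ht1
  have harg : ((1:ℝ) - t)⁻¹ - 1 = t / (1 - t) := by field_simp; ring
  have hargpos : (0:ℝ) < ((1:ℝ) - t)⁻¹ - 1 := by rw [harg]; positivity
  have hgval : g (1 - t) = Real.log (t⁻¹ - 1) / (2 * t - 1) := by
    simp only [hg_def]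
    rw [harg, Real.log_div (ne_of_gt ht) hne, hlog]
    rw [show t - (1 - t) = 2*t - 1 by ring]
    rw [show -(Real.log t - Real.log (1-t)) = Real.log (1-t) - Real.log t by ring]
  have hgc : ContinuousAt g (1 - t) := by
    apply ContinuousAt.div
    · have hc1 : ContinuousAt (fun x : ℝ => x⁻¹ - 1) (1 - t) :=
        (continuousAt_inv₀ hne).sub continuousAt_const
      have hc2 : ContinuousAt (fun x : ℝ => Real.log (x⁻¹ - 1)) (1 - t) :=
        ContinuousAt.comp (x := 1 - t) (f := fun x : ℝ => x⁻¹ - 1)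
          (Real.continuousAt_log (ne_of_gt hargpos)) hc1
      exact hc2.neg
    · fun_prop
    · rw [show t - (1 - t) = 2*t - 1 by ring]; intro h; linarith [h]
  have h1 : ∀ᶠ x in 𝓝[>] (1 - t), w < g x := by
    apply eventually_nhdsWithin_of_eventually_nhds
    have : ∀ᶠ z in 𝓝 (g (1 - t)), w < z := eventually_gt_nhds (by rw [hgval]; exact hw)
    exact hgc.eventually_mem this
  have h2 : ∀ᶠ x in 𝓝[>] (1 - t), x < s := by
    apply eventually_nhdsWithin_of_eventually_nhds
    exact eventually_lt_nhds (by linarith)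
  have h3 : ∀ᶠ x in 𝓝[>] (1 - t), 1 - t < x := eventually_mem_nhdsWithin
  obtain ⟨x, hwx, hxs, hxt⟩ := (h1.and (h2.and h3)).exists
  exact ⟨g x, ⟨x, t, by linarith, le_of_lt hxs, by linarith, le_refl t, rfl⟩, hwx⟩
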